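/- arXiv:1702.06080 — 3 statements merged into one kernel-verified Lean document; each statement's English description precedes it below -/
import Mathlib

section
/- Any two continuous free actions of the circle group S¹ on S¹ are equivalent; that is, if μ₁ and μ₂ are continuous free actions of S¹ on S¹, then there exists a homeomorphism Ψ : S¹ → S¹ such that Ψ(μ₁(g, x)) = μ₂(g, Ψ(x)) for all g ∈ S¹ and x ∈ S¹. In particular, every continuous free action of S¹ on itself is equivalent to the action by complex multiplication. -/
open Complex Set Function

noncomputable section

private lemma circle_connectedSpace : ConnectedSpace Circle := by
  rw [connectedSpace_iff_univ]
  have h : range Circle.exp = univ := by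
    ext z
    simp only [mem_range, mem_univ, iff_true]
    exact ⟨Complex.arg z, Circle.exp_arg z⟩
  rw [← h]
  exact isConnected_range Circle.exp.continuous

private lemma circle_coe_cont : Continuous ((↑) : Circle → ℂ) :=
  continuous_subtype_val

private lemma circle_slit {z : Circle} (h : (z : ℂ) ≠ -1) : (z : ℂ) ∈ Complex.slitPlane := by
  rw [Complex.mem_slitPlane_iff]
  by_contra hc
  push_neg at hc
  obtain ⟨h1, h2⟩ := hc
  apply h
  have hz : (z : ℂ) = (((z : ℂ).re : ℝ) : ℂ) := by
    apply Complex.ext <;> simp [h2]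
  have habs : ‖(z : ℂ)‖ = 1 := Circle.norm_coe z
  rw [hz, Complex.norm_real, Real.norm_eq_abs] at habs
  have : (z : ℂ).re = -1 := by
    rcases abs_cases (z : ℂ).re with ⟨he, _⟩ | ⟨he, _⟩ <;> linarith
  rw [hz, this]
  norm_num

/-- The complement of a point in the circle is connected. -/
private lemma circle_compl_connected (q : Circle) : IsConnected ({q}ᶜ : Set Circle) := by
  obtain ⟨a, ha⟩ : ∃ a, Circle.exp a = q := ⟨Complex.arg q, Circle.exp_arg q⟩
  have two_pi_pos : (0:ℝ) < 2 * Real.pi := by positivity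
  have himg : Circle.exp '' (Ioo a (a + 2 * Real.pi)) = ({q}ᶜ : Set Circle) := by
    ext z
    constructor
    · rintro ⟨θ, hθ, rfl⟩
      simp only [mem_compl_iff, mem_singleton_iff]
      intro hz
      rw [← ha, Circle.exp_eq_exp] at hz
      obtain ⟨m, hm⟩ := hz
      have hθ1 := hθ.1
      have hθ2 := hθ.2
      rw [hm] at hθ1 hθ2
      have h1 : (0:ℝ) * (2 * Real.pi) < (m:ℝ) * (2 * Real.pi) := by linarith
      have h2 : (m:ℝ) * (2 * Real.pi) < 1 * (2 * Real.pi) := by linarith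
      have hm0 : (0:ℤ) < m := by exact_mod_cast (mul_lt_mul_iff_of_pos_right two_pi_pos).mp h1
      have hm1 : (m:ℤ) < 1 := by exact_mod_cast (mul_lt_mul_iff_of_pos_right two_pi_pos).mp h2
      omega
    · intro hz
      simp only [mem_compl_iff, mem_singleton_iff] at hz
      set θ := toIocMod two_pi_pos a (Complex.arg (z:ℂ)) with hθdef
      have hmem := toIocMod_mem_Ioc two_pi_pos a (Complex.arg (z:ℂ))
      have hexp : Circle.exp θ = z := by
        have hsub := self_sub_toIocMod two_pi_pos a (Complex.arg (z:ℂ))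
        rw [← Circle.exp_arg z, Circle.exp_eq_exp]
        refine ⟨-(toIocDiv two_pi_pos a (Complex.arg (z:ℂ))), ?_⟩
        rw [zsmul_eq_mul] at hsub
        push_cast
        linarith
      have hne : θ ≠ a + 2 * Real.pi := by
        intro hEq
        apply hz
        rw [← hexp, hEq, ← ha, Circle.exp_eq_exp]
        exact ⟨1, by push_cast; ring⟩
      exact ⟨θ, ⟨hmem.1, lt_of_le_of_ne hmem.2 hne⟩, hexp⟩
  rw [← himg]
  exact (isConnected_Ioo (by linarith)).image _ Circle.exp.continuous.continuousOn

/-- Main lemma: a continuous free action of the circle on itself is conjugate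
to multiplication. -/
private lemma circle_key (μ : Circle → Circle → Circle)
    (hone : ∀ x, μ 1 x = x)
    (hmul : ∀ g h x, μ (g * h) x = μ g (μ h x))
    (hcont : Continuous fun p : Circle × Circle => μ p.1 p.2)
    (hfree : ∀ g x, μ g x = x → g = 1) :
    ∃ Ψ : Circle ≃ₜ Circle, ∀ g x, Ψ (μ g x) = g * Ψ x := by
  classical
  set e : Circle → Circle := fun g => μ g 1 with he_def
  have he_cont : Continuous e := hcont.comp (continuous_id.prodMk continuous_const)
  have he_inj : Injective e := by
    intro g h hgh
    have h1 : μ (h⁻¹ * g) 1 = 1 := by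
      rw [hmul, he_def] at *
      simp only at hgh
      rw [hgh, ← hmul, inv_mul_cancel, hone]
    have h2 := hfree _ _ h1
    have h3 : h * (h⁻¹ * g) = h * 1 := by rw [h2]
    simpa [← mul_assoc] using h3
  have he_surj : Surjective e := by
    by_contra hns
    rw [Surjective] at hns
    push_neg at hns
    obtain ⟨p, hp⟩ := hns
    set S := range e with hS_def
    have hpS : p ∉ S := by rintro ⟨g, rfl⟩; exact hp g rfl
    have hScomp : IsCompact S := isCompact_range he_cont
    have : ConnectedSpace Circle := circle_connectedSpace
    have hSconn : IsConnected S := isConnected_range he_cont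
    -- the "chart" f
    set f : Circle → ℝ := fun z => Complex.arg ((Circle.exp Real.pi * p⁻¹ * z : Circle) : ℂ)
      with hf_def
    have hf_inj : Injective f := by
      intro z w hzw
      have := Circle.injective_arg hzw
      exact mul_left_cancel this
    have hf_cont : ContinuousOn f S := by
      intro z hz
      apply ContinuousAt.continuousWithinAt
      have hne : ((Circle.exp Real.pi * p⁻¹ * z : Circle) : ℂ) ≠ -1 := by
        intro hEq
        apply hpS
        have h1 : ((Circle.exp Real.pi * p⁻¹ * z : Circle) : ℂ)
            = ((Circle.exp Real.pi : Circle) : ℂ) := by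
          rw [hEq, Circle.coe_exp]
          rw [Complex.exp_mul_I]
          simp
        have h2 : Circle.exp Real.pi * p⁻¹ * z = Circle.exp Real.pi := Subtype.ext h1
        have h3 : p⁻¹ * z = 1 := mul_left_cancel (by rw [← mul_assoc, h2, mul_one])
        have : z = p := by
          have := congrArg (fun w => p * w) h3
          simpa [← mul_assoc] using this
        rw [← this]; exact hz
      have hc : Continuous fun w : Circle => ((Circle.exp Real.pi * p⁻¹ * w : Circle) : ℂ) :=
        circle_coe_cont.comp (continuous_const.mul continuous_id)
      show ContinuousAt (Complex.arg ∘ fun w : Circle =>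
        ((Circle.exp Real.pi * p⁻¹ * w : Circle) : ℂ)) z
      exact ContinuousAt.comp (f := fun w : Circle =>
          ((Circle.exp Real.pi * p⁻¹ * w : Circle) : ℂ))
        (Complex.continuousAt_arg (circle_slit hne)) hc.continuousAt
    set J := f '' S with hJ_def
    have hJconn : IsPreconnected J := hSconn.isPreconnected.image f hf_cont
    -- two distinct points of S
    have hpi : Circle.exp Real.pi ≠ 1 := by
      intro hEq
      have h1 : Complex.arg ((Circle.exp Real.pi : Circle) : ℂ) = Real.pi :=
        Circle.arg_exp (by linarith [Real.pi_pos]) le_rfl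
      rw [hEq, show (((1 : Circle) : ℂ)) = 1 from rfl, Complex.arg_one] at h1
      exact Real.pi_ne_zero h1.symm
    have h2pts : ∃ u v : Circle, u ∈ S ∧ v ∈ S ∧ f u < f v := by
      have hne : e 1 ≠ e (Circle.exp Real.pi) := fun h => hpi (he_inj h).symm
      have hfne : f (e 1) ≠ f (e (Circle.exp Real.pi)) := fun h => hne (hf_inj h)
      rcases hfne.lt_or_gt with h | h
      · exact ⟨e 1, e (Circle.exp Real.pi), ⟨1, rfl⟩, ⟨_, rfl⟩, h⟩
      · exact ⟨e (Circle.exp Real.pi), e 1, ⟨_, rfl⟩, ⟨1, rfl⟩, h⟩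
    obtain ⟨u, v, huS, hvS, huv⟩ := h2pts
    set c := (f u + f v) / 2 with hc_def
    have hcu : f u < c := by rw [hc_def]; linarith
    have hcv : c < f v := by rw [hc_def]; linarith
    have hcJ : c ∈ J := by
      apply hJconn.Icc_subset (mem_image_of_mem f huS) (mem_image_of_mem f hvS)
      exact ⟨le_of_lt hcu, le_of_lt hcv⟩
    obtain ⟨q, hqS, hfq⟩ := hcJ
    obtain ⟨g₀, rfl⟩ := hqS
    -- T = S \ {e g₀}
    have hT_eq : e '' ({g₀}ᶜ : Set Circle) = S \ {e g₀} := by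
      ext z
      simp only [mem_image, mem_diff, mem_compl_iff, mem_singleton_iff, hS_def, mem_range]
      constructor
      · rintro ⟨g, hg, rfl⟩
        exact ⟨⟨g, rfl⟩, fun hEq => hg (he_inj hEq)⟩
      · rintro ⟨⟨g, rfl⟩, hz⟩
        exact ⟨g, fun hEq => hz (by rw [hEq]), rfl⟩
    have hTconn : IsPreconnected (S \ {e g₀}) := by
      rw [← hT_eq]
      exact ((circle_compl_connected g₀).image e he_cont.continuousOn).isPreconnected
    have hT'conn : IsPreconnected (f '' (S \ {e g₀})) :=
      hTconn.image f (hf_cont.mono diff_subset)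
    have hcover : f '' (S \ {e g₀}) ⊆ Iio c ∪ Ioi c := by
      rintro _ ⟨z, ⟨hzS, hzq⟩, rfl⟩
      have : f z ≠ c := by
        rw [← hfq]; exact fun h => hzq (hf_inj h)
      rcases this.lt_or_gt with h | h
      · exact Or.inl h
      · exact Or.inr h
    have humem : f u ∈ f '' (S \ {e g₀}) ∩ Iio c := by
      refine ⟨mem_image_of_mem f ⟨huS, ?_⟩, hcu⟩
      intro hEq
      rw [mem_singleton_iff] at hEq
      rw [hEq, hfq] at hcu
      exact lt_irrefl _ hcu
    have hvmem : f v ∈ f '' (S \ {e g₀}) ∩ Ioi c := by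
      refine ⟨mem_image_of_mem f ⟨hvS, ?_⟩, hcv⟩
      intro hEq
      rw [mem_singleton_iff] at hEq
      rw [hEq, hfq] at hcv
      exact lt_irrefl _ hcv
    obtain ⟨x, -, hx1, hx2⟩ := hT'conn (Iio c) (Ioi c) isOpen_Iio isOpen_Ioi
      hcover ⟨f u, humem⟩ ⟨f v, hvmem⟩
    exact lt_asymm (mem_Iio.mp hx1) (mem_Ioi.mp hx2)
  -- conclude
  let E : Circle ≃ Circle := Equiv.ofBijective e ⟨he_inj, he_surj⟩
  have hEc : Continuous E := he_cont
  let H : Circle ≃ₜ Circle := hEc.homeoOfEquivCompactToT2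
  refine ⟨H.symm, fun g x => ?_⟩
  apply H.injective
  rw [H.apply_symm_apply]
  have hH : ∀ z, H z = e z := fun z => rfl
  have hx : μ (H.symm x) 1 = x := by
    have h1 := H.apply_symm_apply x
    rw [hH] at h1
    exact h1
  rw [hH]
  show μ g x = μ (g * H.symm x) 1
  rw [hmul, hx]

end

/-- Any two continuous free actions of the circle group `S¹` on `S¹` are equivalent,
and in particular each is equivalent to the action by (complex) multiplication. -/
theorem stmt0
    (μ₁ μ₂ : Circle → Circle → Circle)
    (h₁one : ∀ x, μ₁ 1 x = x)
    (h₁mul : ∀ g h x, μ₁ (g * h) x = μ₁ g (μ₁ h x))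
    (h₁cont : Continuous fun p : Circle × Circle => μ₁ p.1 p.2)
    (h₁free : ∀ g x, μ₁ g x = x → g = 1)
    (h₂one : ∀ x, μ₂ 1 x = x)
    (h₂mul : ∀ g h x, μ₂ (g * h) x = μ₂ g (μ₂ h x))
    (h₂cont : Continuous fun p : Circle × Circle => μ₂ p.1 p.2)
    (h₂free : ∀ g x, μ₂ g x = x → g = 1) :
    (∃ Ψ : Circle ≃ₜ Circle, ∀ g x, Ψ (μ₁ g x) = μ₂ g (Ψ x)) ∧
    (∃ Ψ : Circle ≃ₜ Circle, ∀ g x, Ψ (μ₁ g x) = g * Ψ x) := by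
  obtain ⟨Ψ₁, hΨ₁⟩ := circle_key μ₁ h₁one h₁mul h₁cont h₁free
  obtain ⟨Ψ₂, hΨ₂⟩ := circle_key μ₂ h₂one h₂mul h₂cont h₂free
  constructor
  · refine ⟨Ψ₁.trans Ψ₂.symm, fun g x => ?_⟩
    apply Ψ₂.injective
    simp only [Homeomorph.trans_apply]
    rw [Ψ₂.apply_symm_apply, hΨ₁, hΨ₂, Ψ₂.apply_symm_apply]
  · exact ⟨Ψ₁, hΨ₁⟩
end

section
/- For a continuous free action μ of S¹ on S¹, choosing any base point s ∈ S¹, the map g ↦ μ(g, s) is a homeomorphism from S¹ onto S¹; in particular the action is transitive. -/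
open Complex Set

private instance circle_preconnected : PreconnectedSpace Circle := by
  constructor
  have hr : Set.range ⇑Circle.exp = Set.univ := by
    apply Set.eq_univ_of_univ_subset
    intro x _
    obtain ⟨t, -, ht⟩ := Circle.surjOn_exp_neg_pi_pi (Set.mem_univ x)
    exact ⟨t, ht⟩
  rw [← hr]
  exact isPreconnected_range Circle.exp.continuous

/-- A continuous injective map `Circle → ℝ` cannot exist. -/
private lemma no_cont_inj_circle_real (g : Circle → ℝ) (hg : Continuous g)
    (hinj : Function.Injective g) : False := by
  set c : Circle := Circle.exp Real.pi with hc
  have hc2 : c * c = 1 := by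
    apply Circle.ext
    push_cast [hc, Circle.coe_exp]
    rw [← Complex.exp_add]
    have : (↑Real.pi * Complex.I + ↑Real.pi * Complex.I) = 2 * ↑Real.pi * Complex.I := by ring
    rw [this, Complex.exp_two_pi_mul_I]
  have hcne : c ≠ 1 := by
    intro h
    have : (c : ℂ) = 1 := by rw [h]; rfl
    rw [hc, Circle.coe_exp, Complex.exp_pi_mul_I] at this
    norm_num at this
  set G : Circle → ℝ := fun x => g x - g (x * c) with hG
  have hGc : Continuous G := hg.sub (hg.comp (continuous_id.mul continuous_const))
  have hanti : ∀ x, G (x * c) = - G x := by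
    intro x
    simp only [hG, mul_assoc, hc2, mul_one]
    ring
  -- by IVT, G vanishes somewhere
  obtain ⟨x, hx⟩ : ∃ x, G x = 0 := by
    rcases le_total (G 1) 0 with h | h
    · have : (0:ℝ) ∈ Set.Icc (G 1) (G (1 * c)) := by
        rw [hanti]; exact ⟨h, by linarith⟩
      obtain ⟨x, hx⟩ := intermediate_value_univ 1 (1 * c) hGc this
      exact ⟨x, hx⟩
    · have : (0:ℝ) ∈ Set.Icc (G (1 * c)) (G 1) := by
        rw [hanti]; exact ⟨by linarith, h⟩
      obtain ⟨x, hx⟩ := intermediate_value_univ (1 * c) 1 hGc this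
      exact ⟨x, hx⟩
  have : g x = g (x * c) := by
    have := hx; simp only [hG] at this; linarith
  have hxx : x = x * c := hinj this
  exact hcne (by
    have := hxx.symm
    calc c = x⁻¹ * (x * c) := by group
    _ = x⁻¹ * x := by rw [← hxx]
    _ = 1 := by group)

/-- A continuous injective map `Circle → Circle` is surjective. -/
private lemma cont_inj_circle_surj (f : Circle → Circle) (hf : Continuous f)
    (hinj : Function.Injective f) : Function.Surjective f := by
  intro y
  by_contra hy
  push_neg at hy
  -- map into ℝ via arg(-(x/y))
  set h : Circle → ℝ := fun x => Complex.arg (-((x : ℂ) / (y : ℂ))) with hh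
  have habs : ∀ x : Circle, ‖(-((x : ℂ) / (y : ℂ)))‖ = 1 := by
    intro x
    simp [Circle.norm_coe]
  have hne : ∀ x : Circle, x ≠ y → -((x : ℂ) / (y : ℂ)) ∈ Complex.slitPlane := by
    intro x hxy
    by_contra hmem
    rw [Complex.mem_slitPlane_iff] at hmem
    push_neg at hmem
    obtain ⟨h1, h2⟩ := hmem
    have hab := habs x
    set z := -((x : ℂ) / (y : ℂ)) with hz
    have hz' : z = ((z.re : ℝ) : ℂ) := Complex.ext rfl (by simp [h2])
    have habs' : |z.re| = 1 := by
      rw [hz', Complex.norm_real, Real.norm_eq_abs] at hab; exact hab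
    have hre : z.re = -1 := by
      cases abs_cases z.re with
      | inl h => linarith [h.1, habs']
      | inr h => linarith [h.1, habs']
    have : z = -1 := by
      rw [hz']
      rw [hre]
      norm_num
    have hxy' : x = y := by
      rw [hz] at this
      have h3 : (x : ℂ) / (y : ℂ) = 1 := by
        have := neg_eq_iff_eq_neg.mp this
        rw [this]; ring
      have hy0 : (y : ℂ) ≠ 0 := Circle.coe_ne_zero y
      field_simp at h3
      exact Circle.ext h3
    exact hxy hxy'
  -- h ∘ f is continuous
  have hFc : Continuous (fun x : Circle => -((x : ℂ) / (y : ℂ))) :=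
    (continuous_subtype_val.div_const _).neg
  have hcont2 : Continuous (h ∘ f) := by
    rw [continuous_iff_continuousAt]
    intro a
    have h1 : ContinuousAt h (f a) :=
      ContinuousAt.comp (g := Complex.arg)
        (f := fun x : Circle => -((x : ℂ) / (y : ℂ)))
        (Complex.continuousAt_arg (hne (f a) (hy a))) hFc.continuousAt
    exact h1.comp hf.continuousAt
  -- h ∘ f is injective
  have hinj2 : Function.Injective (h ∘ f) := by
    intro a b hab
    apply hinj
    have h1 : -((f a : ℂ) / (y : ℂ)) = -((f b : ℂ) / (y : ℂ)) := by
      apply Complex.ext_norm_arg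
      · rw [habs, habs]
      · exact hab
    have hy0 : (y : ℂ) ≠ 0 := Circle.coe_ne_zero y
    field_simp at h1
    exact Circle.ext (neg_inj.mp h1)
  exact no_cont_inj_circle_real (h ∘ f) hcont2 hinj2

/-- For a continuous free action `μ` of `S¹` on `S¹` and any base point `s`, the orbit
map `g ↦ μ g s` is a homeomorphism of `S¹` onto `S¹`; in particular the action is
transitive. -/
theorem stmt1
    (μ : Circle → Circle → Circle)
    (hone : ∀ x, μ 1 x = x)
    (hmul : ∀ g h x, μ (g * h) x = μ g (μ h x))
    (hcont : Continuous fun p : Circle × Circle => μ p.1 p.2)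
    (hfree : ∀ g x, μ g x = x → g = 1)
    (s : Circle) :
    (∃ Ψ : Circle ≃ₜ Circle, ∀ g : Circle, Ψ g = μ g s) ∧
    (∀ y : Circle, ∃ g : Circle, μ g s = y) := by
  set f : Circle → Circle := fun g => μ g s with hfdef
  have hfc : Continuous f := hcont.comp (continuous_id.prodMk continuous_const)
  have hinj : Function.Injective f := by
    intro a b hab
    have : μ (b⁻¹ * a) s = s := by
      rw [hmul, show μ a s = μ b s from hab, ← hmul, inv_mul_cancel, hone]
    have := hfree _ _ this
    have : b⁻¹ * a = 1 := this
    calc a = b * (b⁻¹ * a) := by group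
    _ = b * 1 := by rw [this]
    _ = b := mul_one b
  have hsurj : Function.Surjective f := cont_inj_circle_surj f hfc hinj
  refine ⟨?_, fun y => hsurj y⟩
  let e : Circle ≃ Circle := Equiv.ofBijective f ⟨hinj, hsurj⟩
  have hec : Continuous e := hfc
  exact ⟨hec.homeoOfEquivCompactToT2, fun g => rfl⟩
end

section
/- For coprime integers μ, ν with 0 < ν < μ, the orbit space of the S¹-action z·(w, u) = (z^ν w, z^μ u) on D² × S¹ is homeomorphic to the closed 2-disk D². -/
open Complex

noncomputable section

namespace Stmt10Aux

abbrev D := Metric.closedBall (0:ℂ) 1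

lemma norm_circle (z : Circle) : ‖(z:ℂ)‖ = 1 := by
  simpa using Circle.norm_coe z

lemma mem_D_iff {c : ℂ} : c ∈ D ↔ ‖c‖ ≤ 1 := by
  simp [D, Metric.mem_closedBall, dist_zero_right]

def act (μ ν : ℕ) (z : Circle) (p : D × Circle) : D × Circle :=
  (⟨((z ^ ν : Circle) : ℂ) * p.1, by
      rw [mem_D_iff, norm_mul, norm_circle, one_mul]
      exact mem_D_iff.1 p.1.2⟩, z ^ μ * p.2)

def f (μ ν : ℕ) (p : D × Circle) : D :=
  ⟨(p.1 : ℂ) ^ μ * ((p.2⁻¹ ^ ν : Circle) : ℂ), by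
    rw [mem_D_iff, norm_mul, norm_circle, mul_one, norm_pow]
    exact pow_le_one₀ (norm_nonneg _) (mem_D_iff.1 p.1.2)⟩

lemma coe_pow (z : Circle) (n : ℕ) : ((z ^ n : Circle) : ℂ) = (z : ℂ) ^ n := by
  induction n with
  | zero => simp
  | succ n ih => rw [pow_succ, pow_succ, Circle.coe_mul, ih]

lemma f_act (μ ν : ℕ) (z : Circle) (p : D × Circle) : f μ ν (act μ ν z p) = f μ ν p := by
  apply Subtype.ext
  show (((z ^ ν : Circle) : ℂ) * p.1) ^ μ * (((z ^ μ * p.2)⁻¹ ^ ν : Circle) : ℂ)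
      = (p.1 : ℂ) ^ μ * ((p.2⁻¹ ^ ν : Circle) : ℂ)
  simp only [coe_pow, Circle.coe_inv, Circle.coe_mul, mul_pow, mul_inv, inv_pow]
  have hz : (z : ℂ) ≠ 0 := Circle.coe_ne_zero z
  have hu : (p.2 : ℂ) ≠ 0 := Circle.coe_ne_zero p.2
  field_simp
  ring

lemma exp_pow (t : ℝ) (n : ℕ) : Circle.exp t ^ n = Circle.exp (n * t) := by
  induction n with
  | zero => simp [Circle.exp_zero]
  | succ n ih =>
      rw [pow_succ, ih, ← Circle.exp_add]
      congr 1
      push_cast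
      ring

lemma zpow_swap {G : Type*} [CommGroup G] (g : G) (m n : ℤ) : (g ^ m) ^ n = (g ^ n) ^ m := by
  rw [← zpow_mul, mul_comm, zpow_mul]

end Stmt10Aux

end

/-- For coprime `μ, ν` with `0 < ν < μ`, the orbit space of the `S¹`-action
`z·(w, u) = (zᶮw, zᵘu)` on the solid torus `D² × S¹` is homeomorphic to the closed
`2`-disk `D²`. -/
theorem stmt10 (μ ν : ℕ) (hν : 0 < ν) (hνμ : ν < μ) (hco : Nat.Coprime μ ν) :
    ∃ act : Circle → (Metric.closedBall (0:ℂ) 1) × Circle →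
        (Metric.closedBall (0:ℂ) 1) × Circle,
      (∀ (z : Circle) (w : Metric.closedBall (0:ℂ) 1) (u : Circle),
        ((act z (w, u)).1 : ℂ) = ((z ^ ν : Circle) : ℂ) * (w : ℂ) ∧
        (act z (w, u)).2 = z ^ μ * u) ∧
      Nonempty (Quot (fun p q => ∃ z : Circle, act z p = q) ≃ₜ
        (Metric.closedBall (0:ℂ) 1)) := by
  classical
  have hμ : 0 < μ := lt_trans hν hνμ
  refine ⟨Stmt10Aux.act μ ν, fun z w u => ⟨rfl, rfl⟩, ⟨?_⟩⟩
  set r : _ → _ → Prop := fun p q => ∃ z : Circle, Stmt10Aux.act μ ν z p = q with hr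
  have hlift : ∀ p q, r p q → Stmt10Aux.f μ ν p = Stmt10Aux.f μ ν q := by
    rintro p q ⟨z, rfl⟩
    exact (Stmt10Aux.f_act μ ν z p).symm
  let F : Quot r → Stmt10Aux.D := Quot.lift (Stmt10Aux.f μ ν) hlift
  have hfc : Continuous (Stmt10Aux.f μ ν) := by
    apply Continuous.subtype_mk
    have hcoe : Continuous ((↑) : Circle → ℂ) := continuous_subtype_val
    have h1 : Continuous fun p : Stmt10Aux.D × Circle => (p.1 : ℂ) ^ μ := by
      exact (continuous_subtype_val.comp continuous_fst).pow μ
    have h2a : Continuous fun p : Stmt10Aux.D × Circle => p.2 := continuous_snd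
    have h2 : Continuous fun p : Stmt10Aux.D × Circle => ((p.2⁻¹ ^ ν : Circle) : ℂ) := by
      exact hcoe.comp ((h2a.inv).pow ν)
    exact h1.mul h2
  have hFc : Continuous F := continuous_quot_lift hlift hfc
  -- surjectivity
  have hsurj : Function.Surjective F := by
    intro d
    obtain ⟨w, hw⟩ : ∃ w : ℂ, w ^ μ = (d : ℂ) := IsAlgClosed.exists_pow_nat_eq _ hμ
    have hwle : ‖w‖ ≤ 1 := by
      by_contra h
      push_neg at h
      have := one_lt_pow₀ h hμ.ne'
      rw [← norm_pow, hw] at this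
      exact absurd (Stmt10Aux.mem_D_iff.1 d.2) (by linarith)
    refine ⟨Quot.mk r (⟨w, Stmt10Aux.mem_D_iff.2 hwle⟩, 1), ?_⟩
    have hFe : F (Quot.mk r (⟨w, Stmt10Aux.mem_D_iff.2 hwle⟩, 1))
        = Stmt10Aux.f μ ν (⟨w, Stmt10Aux.mem_D_iff.2 hwle⟩, 1) := rfl
    rw [hFe]
    apply Subtype.ext
    simp [Stmt10Aux.f, hw]
  -- injectivity
  have hinj : Function.Injective F := by
    intro a b
    refine Quot.induction_on a (fun x => Quot.induction_on b (fun y hxy => ?_))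
    apply Quot.sound
    have hfeq' : Stmt10Aux.f μ ν x = Stmt10Aux.f μ ν y := hxy
    have hfeq : (x.1 : ℂ) ^ μ * ((x.2⁻¹ ^ ν : Circle) : ℂ)
        = (y.1 : ℂ) ^ μ * ((y.2⁻¹ ^ ν : Circle) : ℂ) := congrArg Subtype.val hfeq'
    rw [Stmt10Aux.coe_pow, Stmt10Aux.coe_pow, Circle.coe_inv, Circle.coe_inv] at hfeq
    have hx2 : (x.2 : ℂ) ≠ 0 := Circle.coe_ne_zero _
    have hy2 : (y.2 : ℂ) ≠ 0 := Circle.coe_ne_zero _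
    have key : (x.1 : ℂ) ^ μ * (y.2 : ℂ) ^ ν = (y.1 : ℂ) ^ μ * (x.2 : ℂ) ^ ν := by
      have e1 : (x.2 : ℂ) ^ ν * (x.2 : ℂ)⁻¹ ^ ν = 1 := by
        rw [← mul_pow, mul_inv_cancel₀ hx2, one_pow]
      have e2 : (y.2 : ℂ) ^ ν * (y.2 : ℂ)⁻¹ ^ ν = 1 := by
        rw [← mul_pow, mul_inv_cancel₀ hy2, one_pow]
      linear_combination ((x.2 : ℂ) ^ ν * (y.2 : ℂ) ^ ν) * hfeq
        - (x.1 : ℂ) ^ μ * (y.2 : ℂ) ^ ν * e1 + (y.1 : ℂ) ^ μ * (x.2 : ℂ) ^ ν * e2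
    by_cases hx1 : (x.1 : ℂ) = 0
    · -- then y.1 = 0 too; take z a μ-th root of y.2 / x.2
      have hy1 : (y.1 : ℂ) = 0 := by
        have h0 : (y.1 : ℂ) ^ μ * (x.2 : ℂ) ^ ν = 0 := by
          rw [← key, hx1, zero_pow hμ.ne', zero_mul]
        rcases mul_eq_zero.1 h0 with h | h
        · exact pow_eq_zero_iff hμ.ne' |>.1 h
        · exact absurd (pow_eq_zero_iff hν.ne' |>.1 h) hx2
      set s : Circle := y.2 * x.2⁻¹ with hs
      obtain ⟨θ, hθ⟩ : ∃ θ : ℝ, Circle.exp θ = s := ⟨_, Circle.exp_arg s⟩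
      refine ⟨Circle.exp (θ / μ), ?_⟩
      have hzμ : Circle.exp (θ / μ) ^ μ = s := by
        rw [Stmt10Aux.exp_pow, mul_div_cancel₀ _ (by exact_mod_cast hμ.ne'), hθ]
      apply Prod.ext
      · apply Subtype.ext
        show ((Circle.exp (θ / μ) ^ ν : Circle) : ℂ) * (x.1 : ℂ) = (y.1 : ℂ)
        rw [hx1, mul_zero, hy1]
      · show Circle.exp (θ / μ) ^ μ * x.2 = y.2
        rw [hzμ, hs, inv_mul_cancel_right]
    · -- general case: build z from Bezout
      have hy1 : (y.1 : ℂ) ≠ 0 := by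
        intro h
        apply hx1
        have h0 : (x.1 : ℂ) ^ μ * (y.2 : ℂ) ^ ν = 0 := by
          rw [key, h, zero_pow hμ.ne', zero_mul]
        rcases mul_eq_zero.1 h0 with h' | h'
        · exact pow_eq_zero_iff hμ.ne' |>.1 h'
        · exact absurd (pow_eq_zero_iff hν.ne' |>.1 h') hy2
      have hnormeq : ‖(x.1 : ℂ)‖ = ‖(y.1 : ℂ)‖ := by
        have h1 : ‖(x.1 : ℂ)‖ ^ μ = ‖(y.1 : ℂ)‖ ^ μ := by
          have := congrArg (‖·‖) key
          simpa [norm_mul, norm_pow, Stmt10Aux.norm_circle] using this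
        exact (pow_left_inj₀ (norm_nonneg _) (norm_nonneg _) hμ.ne').1 h1
      have hnorm : ‖(y.1 : ℂ) / (x.1 : ℂ)‖ = 1 := by
        rw [norm_div, ← hnormeq, div_self (by simpa using hx1)]
      set c : Circle := ⟨(y.1 : ℂ) / (x.1 : ℂ), mem_sphere_zero_iff_norm.2 hnorm⟩ with hc
      set s : Circle := y.2 * x.2⁻¹ with hs
      have hcs : c ^ μ = s ^ ν := by
        apply Circle.coe_injective
        rw [Stmt10Aux.coe_pow, Stmt10Aux.coe_pow]
        show ((y.1 : ℂ) / (x.1 : ℂ)) ^ μ = ((y.2 * x.2⁻¹ : Circle) : ℂ) ^ ν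
        rw [Circle.coe_mul, Circle.coe_inv]
        have e1 : (x.1 : ℂ) ^ μ * (x.1 : ℂ)⁻¹ ^ μ = 1 := by
          rw [← mul_pow, mul_inv_cancel₀ hx1, one_pow]
        have e2 : (x.2 : ℂ) ^ ν * (x.2 : ℂ)⁻¹ ^ ν = 1 := by
          rw [← mul_pow, mul_inv_cancel₀ (Circle.coe_ne_zero x.2), one_pow]
        rw [div_eq_mul_inv, mul_pow, mul_pow]
        linear_combination (-((x.1 : ℂ)⁻¹ ^ μ * (x.2 : ℂ)⁻¹ ^ ν)) * key
          + (y.2 : ℂ) ^ ν * (x.2 : ℂ)⁻¹ ^ ν * e1 - (y.1 : ℂ) ^ μ * (x.1 : ℂ)⁻¹ ^ μ * e2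
      obtain ⟨a, b, hab⟩ : ∃ a b : ℤ, a * μ + b * ν = 1 := by
        obtain ⟨a, b, h⟩ := Nat.isCoprime_iff_coprime.mpr hco
        exact ⟨a, b, h⟩
      have hcsz : c ^ (μ : ℤ) = s ^ (ν : ℤ) := by
        rw [zpow_natCast, zpow_natCast, hcs]
      have hzν : (s ^ a * c ^ b) ^ (ν : ℤ) = c := by
        rw [mul_zpow, Stmt10Aux.zpow_swap s a, Stmt10Aux.zpow_swap c b, ← hcsz,
          ← zpow_mul, ← zpow_mul, ← zpow_add,
          show (μ : ℤ) * a + (ν : ℤ) * b = 1 by linarith, zpow_one]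
      have hzμ : (s ^ a * c ^ b) ^ (μ : ℤ) = s := by
        rw [mul_zpow, Stmt10Aux.zpow_swap c b, hcsz,
          ← zpow_mul, ← zpow_mul, ← zpow_add,
          show a * (μ : ℤ) + (ν : ℤ) * b = 1 by linarith, zpow_one]
      refine ⟨s ^ a * c ^ b, ?_⟩
      apply Prod.ext
      · apply Subtype.ext
        show (((s ^ a * c ^ b) ^ ν : Circle) : ℂ) * (x.1 : ℂ) = (y.1 : ℂ)
        have hn : (s ^ a * c ^ b) ^ ν = c := by rw [← zpow_natCast, hzν]
        rw [hn]
        show (y.1 : ℂ) / (x.1 : ℂ) * (x.1 : ℂ) = (y.1 : ℂ)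
        exact div_mul_cancel₀ _ hx1
      · show (s ^ a * c ^ b) ^ μ * x.2 = y.2
        have hn : (s ^ a * c ^ b) ^ μ = s := by rw [← zpow_natCast, hzμ]
        rw [hn, hs, inv_mul_cancel_right]
  haveI : CompactSpace Stmt10Aux.D := isCompact_iff_compactSpace.mp (isCompact_closedBall _ _)
  exact Continuous.homeoOfEquivCompactToT2 (f := Equiv.ofBijective F ⟨hinj, hsurj⟩) hFc
end
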